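/- Cross-venue two-pool arbitrage: let two constant-product pools between the same pair of tokens A and B have positive reserves (a₁, b₁) (reserve of A, reserve of B in the first pool) and (b₂, a₂) (reserve of B, reserve of A in the second pool), with fee parameters r₁, r₂ ∈ (0,1]. If a₂·b₁/(a₁·b₂) > 1/(r₁²·r₂²), then there exists an input δ > 0 such that swap(b₂, a₂, swap(a₁, b₁, δ)) > δ, i.e., the length-2 cyclic transaction A → B → A across the two pools is profitable. -/

import Mathlib

/-- Constant-product AMM swap: output of swapping input `δ` through a pool with
input-side reserve `a`, output-side reserve `b` and fee parameters `r1, r2`. -/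
noncomputable def swap (r1 r2 a b δ : ℝ) : ℝ := r1 * r2 * b * δ / (a + r1 * δ)

/-- cross-venue two-pool arbitrage: if the arbitrage index of the
length-2 cycle A → B → A across two pools exceeds 1/(r1² r2²), a profitable
input exists. -/
theorem cross_venue_arbitrage
    (a1 b1 b2 a2 r1 r2 : ℝ)
    (ha1 : 0 < a1) (hb1 : 0 < b1) (hb2 : 0 < b2) (ha2 : 0 < a2)
    (hr1 : 0 < r1) (hr1' : r1 ≤ 1) (hr2 : 0 < r2) (hr2' : r2 ≤ 1)
    (hI : a2 * b1 / (a1 * b2) > 1 / (r1 ^ 2 * r2 ^ 2)) :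
    ∃ δ : ℝ, 0 < δ ∧ swap r1 r2 b2 a2 (swap r1 r2 a1 b1 δ) > δ := by
  have hK : a1 * b2 < r1 ^ 2 * r2 ^ 2 * (a2 * b1) := by
    rw [gt_iff_lt, div_lt_div_iff₀ (by positivity) (by positivity)] at hI
    nlinarith
  set c : ℝ := r1 * b2 + r1 ^ 2 * r2 * b1 with hc
  have hcpos : 0 < c := by positivity
  set δ : ℝ := (r1 ^ 2 * r2 ^ 2 * (a2 * b1) - a1 * b2) / (2 * c) with hδ
  have hδpos : 0 < δ := by
    apply div_pos (by linarith) (by positivity)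
  refine ⟨δ, hδpos, ?_⟩
  have h1 : 0 < a1 + r1 * δ := by positivity
  have hy : swap r1 r2 a1 b1 δ = r1 * r2 * b1 * δ / (a1 + r1 * δ) := rfl
  have h2 : 0 < b2 + r1 * (r1 * r2 * b1 * δ / (a1 + r1 * δ)) := by positivity
  have hδc : δ * (2 * c) = r1 ^ 2 * r2 ^ 2 * (a2 * b1) - a1 * b2 := by
    rw [hδ, div_mul_cancel₀]; positivity
  rw [gt_iff_lt, swap, hy, lt_div_iff₀ h2]
  rw [← mul_lt_mul_iff_of_pos_right h1]
  field_simp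
  nlinarith [mul_pos hδpos hcpos, mul_pos (mul_pos hδpos hδpos) hcpos,
    mul_pos hδpos h1, sq_nonneg δ]
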